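/- A discrete Gaussian random variable X ~ N_ℤ(0, σ²) satisfies E[exp(tX)] ≤ exp(σ²t²/2) for all real t, i.e., it is sub-Gaussian with variance proxy σ². -/

import Mathlib

open Real Complex

/-- Summability of integer Gaussian-type sums `exp (-c n² + d n)` for `c > 0`. -/
lemma summable_exp_quad {c : ℝ} (hc : 0 < c) (d : ℝ) :
    Summable (fun n : ℤ => Real.exp (-c * (n : ℝ) ^ 2 + d * n)) := by
  have h := summable_pow_mul_jacobiTheta₂_term_bound (|d| / (2 * π)) (T := c / π)
    (div_pos hc pi_pos) 0
  refine h.of_nonneg_of_le (fun n => (Real.exp_pos _).le) (fun n => ?_)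
  rw [pow_zero, one_mul]
  apply Real.exp_le_exp.2
  have h1 : d * (n : ℝ) ≤ |d| * |(n : ℝ)| := by
    calc d * (n : ℝ) ≤ |d * (n : ℝ)| := le_abs_self _
    _ = |d| * |(n : ℝ)| := abs_mul _ _
  have hπ : (π : ℝ) ≠ 0 := pi_ne_zero
  have : -π * (c / π * (n : ℝ) ^ 2 - 2 * (|d| / (2 * π)) * |(n : ℤ)|)
      = -c * (n : ℝ) ^ 2 + |d| * |(n : ℝ)| := by
    rw [Int.cast_abs]
    field_simp
    ring
  rw [this]
  linarith

/-- The key comparison: a shifted integer Gaussian sum is at most the centred one.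
Proved via Poisson summation. -/
lemma shifted_gauss_sum_le (σ : ℝ) (hσ : 0 < σ) (μ : ℝ) :
    (∑' x : ℤ, Real.exp (-((x : ℝ) - μ) ^ 2 / (2 * σ ^ 2))) ≤
      ∑' y : ℤ, Real.exp (-(y : ℝ) ^ 2 / (2 * σ ^ 2)) := by
  have hσ2 : (0 : ℝ) < 2 * σ ^ 2 := by positivity
  set a : ℝ := (2 * π * σ ^ 2)⁻¹ with ha_def
  have ha : 0 < a := by positivity
  set b : ℝ := μ * a with hb_def
  -- rewrite the shifted sum
  have hsplit : ∀ x : ℤ, Real.exp (-((x : ℝ) - μ) ^ 2 / (2 * σ ^ 2)) =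
      Real.exp (-π * a * (x : ℝ) ^ 2 + 2 * π * b * (x : ℝ)) * Real.exp (-μ ^ 2 / (2 * σ ^ 2)) := by
    intro x
    rw [← Real.exp_add]
    congr 1
    have hπ : (π : ℝ) ≠ 0 := pi_ne_zero
    have hσ' : (σ : ℝ) ≠ 0 := hσ.ne'
    field_simp [ha_def, hb_def]
    rw [hb_def, ha_def]
    field_simp
    ring
  -- the centred sum, via Poisson summation constant
  have hcen : ∀ y : ℤ, Real.exp (-(y : ℝ) ^ 2 / (2 * σ ^ 2)) =
      Real.exp (-π * a * (y : ℝ) ^ 2) := by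
    intro y
    congr 1
    have hπ : (π : ℝ) ≠ 0 := pi_ne_zero
    have hσ' : (σ : ℝ) ≠ 0 := hσ.ne'
    field_simp [ha_def]
    rw [ha_def]
    field_simp
  have hZ : (∑' y : ℤ, Real.exp (-(y : ℝ) ^ 2 / (2 * σ ^ 2)))
      = (1 : ℝ) / a ^ (1 / 2 : ℝ) * ∑' n : ℤ, Real.exp (-π / a * (n : ℝ) ^ 2) := by
    rw [tsum_congr hcen]
    exact Real.tsum_exp_neg_mul_int_sq ha
  -- Poisson summation for the shifted sum
  have hq := Complex.tsum_exp_neg_quadratic (a := (a : ℂ))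
    (by simpa using ha) (b : ℂ)
  set P : ℝ := ∑' x : ℤ, Real.exp (-π * a * (x : ℝ) ^ 2 + 2 * π * b * (x : ℝ)) with hP_def
  set W : ℂ := ∑' n : ℤ, Complex.exp (-(π : ℂ) / (a : ℂ) * ((n : ℂ) + Complex.I * (b : ℂ)) ^ 2)
    with hW_def
  have hPC : (P : ℂ) = 1 / (a : ℂ) ^ (1 / 2 : ℂ) * W := by
    rw [hP_def, Complex.ofReal_tsum, ← hq]
    congr 1 with n
    rw [Complex.ofReal_exp]
    push_cast
    ring_nf
  set r : ℝ := 1 / a ^ (1 / 2 : ℝ) with hr_def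
  have hr_pos : 0 < r := by
    rw [hr_def]
    positivity
  have hrC : ((r : ℝ) : ℂ) = 1 / (a : ℂ) ^ (1 / 2 : ℂ) := by
    rw [hr_def]
    push_cast [Complex.ofReal_cpow ha.le]
    norm_num
  have hP_re : P = r * W.re := by
    have : (P : ℂ) = (r : ℂ) * W := by rw [hPC, hrC]
    calc P = ((P : ℂ)).re := (Complex.ofReal_re P).symm
    _ = ((r : ℂ) * W).re := by rw [this]
    _ = r * W.re := by rw [Complex.re_ofReal_mul]
  -- norm of the Fourier-side terms
  have hnorm : ∀ n : ℤ, ‖Complex.exp (-(π : ℂ) / (a : ℂ) * ((n : ℂ) + Complex.I * (b : ℂ)) ^ 2)‖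
      = Real.exp (π / a * b ^ 2) * Real.exp (-π / a * (n : ℝ) ^ 2) := by
    intro n
    have hz : -(π : ℂ) / (a : ℂ) * ((n : ℂ) + Complex.I * (b : ℂ)) ^ 2
        = ((-π / a * ((n : ℝ) ^ 2 - b ^ 2) : ℝ) : ℂ)
          + ((-π / a * (2 * (n : ℝ) * b) : ℝ) : ℂ) * Complex.I := by
      have hI : (Complex.I : ℂ) ^ 2 = -1 := Complex.I_sq
      push_cast
      ring_nf
      rw [hI]
      ring
    rw [Complex.norm_exp, hz]
    simp only [Complex.add_re, Complex.ofReal_re, Complex.mul_re, Complex.I_re, Complex.I_im,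
      Complex.ofReal_im, mul_zero, zero_mul, sub_zero, mul_one, zero_sub]
    rw [← Real.exp_add]
    congr 1
    ring
  have hsum_norm : Summable (fun n : ℤ =>
      ‖Complex.exp (-(π : ℂ) / (a : ℂ) * ((n : ℂ) + Complex.I * (b : ℂ)) ^ 2)‖) := by
    rw [summable_congr hnorm]
    apply Summable.mul_left
    have := summable_exp_quad (c := π / a) (div_pos pi_pos ha) 0
    simpa [neg_div] using this
  have hWre : W.re ≤ Real.exp (π / a * b ^ 2) * ∑' n : ℤ, Real.exp (-π / a * (n : ℝ) ^ 2) := by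
    calc W.re ≤ ‖W‖ := Complex.re_le_norm W
    _ ≤ ∑' n : ℤ, ‖Complex.exp (-(π : ℂ) / (a : ℂ) * ((n : ℂ) + Complex.I * (b : ℂ)) ^ 2)‖ :=
        norm_tsum_le_tsum_norm hsum_norm
    _ = ∑' n : ℤ, Real.exp (π / a * b ^ 2) * Real.exp (-π / a * (n : ℝ) ^ 2) :=
        tsum_congr hnorm
    _ = Real.exp (π / a * b ^ 2) * ∑' n : ℤ, Real.exp (-π / a * (n : ℝ) ^ 2) := tsum_mul_left
  -- put everything together
  have hconst : π / a * b ^ 2 = μ ^ 2 / (2 * σ ^ 2) := by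
    have hπ : (π : ℝ) ≠ 0 := pi_ne_zero
    have hσ' : (σ : ℝ) ≠ 0 := hσ.ne'
    rw [hb_def, ha_def]
    field_simp
  calc (∑' x : ℤ, Real.exp (-((x : ℝ) - μ) ^ 2 / (2 * σ ^ 2)))
      = P * Real.exp (-μ ^ 2 / (2 * σ ^ 2)) := by rw [tsum_congr hsplit, tsum_mul_right]
    _ = r * W.re * Real.exp (-μ ^ 2 / (2 * σ ^ 2)) := by rw [hP_re]
    _ ≤ r * (Real.exp (π / a * b ^ 2) * ∑' n : ℤ, Real.exp (-π / a * (n : ℝ) ^ 2))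
          * Real.exp (-μ ^ 2 / (2 * σ ^ 2)) := by
        apply mul_le_mul_of_nonneg_right _ (Real.exp_pos _).le
        exact mul_le_mul_of_nonneg_left hWre hr_pos.le
    _ = r * ∑' n : ℤ, Real.exp (-π / a * (n : ℝ) ^ 2) := by
        rw [hconst]
        rw [show r * (Real.exp (μ ^ 2 / (2 * σ ^ 2)) * ∑' n : ℤ, Real.exp (-π / a * (n : ℝ) ^ 2))
              * Real.exp (-μ ^ 2 / (2 * σ ^ 2))
            = r * (∑' n : ℤ, Real.exp (-π / a * (n : ℝ) ^ 2))
              * (Real.exp (μ ^ 2 / (2 * σ ^ 2)) * Real.exp (-μ ^ 2 / (2 * σ ^ 2))) from by ring]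
        rw [← Real.exp_add,
          show μ ^ 2 / (2 * σ ^ 2) + -μ ^ 2 / (2 * σ ^ 2) = 0 from by ring,
          Real.exp_zero, mul_one]
    _ = ∑' y : ℤ, Real.exp (-(y : ℝ) ^ 2 / (2 * σ ^ 2)) := hZ.symm

theorem discrete_gaussian_subGaussian (σ : ℝ) (hσ : 0 < σ) (t : ℝ) :
    (∑' x : ℤ, Real.exp (t * (x : ℝ)) *
        (Real.exp (-(x : ℝ)^2 / (2 * σ^2)) /
          ∑' y : ℤ, Real.exp (-(y : ℝ)^2 / (2 * σ^2)))) ≤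
      Real.exp (σ^2 * t^2 / 2) := by
  set Z : ℝ := ∑' y : ℤ, Real.exp (-(y : ℝ) ^ 2 / (2 * σ ^ 2)) with hZ_def
  have hσ2 : (0 : ℝ) < 2 * σ ^ 2 := by positivity
  have hZsummable : Summable (fun y : ℤ => Real.exp (-(y : ℝ) ^ 2 / (2 * σ ^ 2))) := by
    have := summable_exp_quad (c := (2 * σ ^ 2)⁻¹) (by positivity) 0
    refine this.congr fun n => ?_
    rw [zero_mul, add_zero]
    congr 1
    field_simp
  have hZpos : 0 < Z := by
    rw [hZ_def]
    exact Summable.tsum_pos hZsummable (fun y => (Real.exp_pos _).le) 0 (Real.exp_pos _)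
  set μ : ℝ := σ ^ 2 * t with hμ_def
  have hterm : ∀ x : ℤ, Real.exp (t * (x : ℝ)) *
      (Real.exp (-(x : ℝ) ^ 2 / (2 * σ ^ 2)) / Z)
      = Real.exp (σ ^ 2 * t ^ 2 / 2) * Real.exp (-((x : ℝ) - μ) ^ 2 / (2 * σ ^ 2)) / Z := by
    intro x
    rw [mul_div_assoc']
    congr 1
    rw [← Real.exp_add, ← Real.exp_add]
    congr 1
    have hσ' : (σ : ℝ) ≠ 0 := hσ.ne'
    rw [hμ_def]
    field_simp
    ring
  calc (∑' x : ℤ, Real.exp (t * (x : ℝ)) * (Real.exp (-(x : ℝ) ^ 2 / (2 * σ ^ 2)) / Z))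
      = ∑' x : ℤ, Real.exp (σ ^ 2 * t ^ 2 / 2) * Real.exp (-((x : ℝ) - μ) ^ 2 / (2 * σ ^ 2)) / Z :=
        tsum_congr hterm
    _ = (Real.exp (σ ^ 2 * t ^ 2 / 2) * ∑' x : ℤ, Real.exp (-((x : ℝ) - μ) ^ 2 / (2 * σ ^ 2))) / Z := by
        rw [tsum_div_const, tsum_mul_left]
    _ ≤ (Real.exp (σ ^ 2 * t ^ 2 / 2) * Z) / Z := by
        gcongr
        exact shifted_gauss_sum_le σ hσ μ
    _ = Real.exp (σ ^ 2 * t ^ 2 / 2) := by field_simp
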